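/- Let f be a probability density on ℝ^d with mode x₀ satisfying f(x) ≥ f(x₀) - C₀‖x-x₀‖^β for ‖x-x₀‖ ≤ h₀ (sup-norm). Then for any bin size 0 < h ≤ h₀, the probability mass of the bin [k₀h, (k₀+1)h) containing x₀ (where k₀ = ⌊x₀/h⌋ componentwise) is at least f(x₀)h^d - C₁h^{d+β}, where C₁ = C₀ ∫_{[0,1)^d} ‖x‖^β dx. -/

import Mathlib

open MeasureTheory Real

private lemma aux_lt_rpow_iff {t r β : ℝ} (ht : 0 < t) (hr : 0 ≤ r) (hβ : 0 < β) :
    t < r ^ β ↔ t ^ (1/β) < r := by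
  constructor
  · intro hlt
    have h1 : t ^ (1/β) < (r ^ β) ^ (1/β) :=
      Real.rpow_lt_rpow ht.le hlt (by positivity)
    rwa [← Real.rpow_mul hr, mul_one_div_cancel hβ.ne', Real.rpow_one] at h1
  · intro hlt
    have h1 : (t ^ (1/β)) ^ β < r ^ β :=
      Real.rpow_lt_rpow (Real.rpow_nonneg ht.le _) hlt hβ
    rwa [← Real.rpow_mul ht.le, one_div_mul_cancel hβ.ne', Real.rpow_one] at h1

private lemma aux_len {a x₀ h s : ℝ} (ha : a ≤ x₀) (hx : x₀ < a + h) (hs : 0 < s) :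
    min s h ≤ min (a + h) (x₀ + s) - max a (x₀ - s) := by
  rcases min_cases (a + h) (x₀ + s) with ⟨h1, _⟩ | ⟨h1, _⟩ <;>
    rcases max_cases a (x₀ - s) with ⟨h2, _⟩ | ⟨h2, _⟩ <;>
    rcases min_cases s h with ⟨h3, _⟩ | ⟨h3, _⟩ <;> rw [h1, h2, h3] <;> linarith

private lemma aux_meas_tail_le (d : ℕ) {h s : ℝ} (hh : 0 < h) (hs : 0 < s)
    (a x₀ : Fin d → ℝ) (hax : ∀ i, a i ≤ x₀ i) (hxa : ∀ i, x₀ i < a i + h) :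
    volume ((Set.univ.pi fun i => Set.Ico (a i) (a i + h)) \ {x : Fin d → ℝ | ‖x - x₀‖ ≤ s})
      ≤ volume ((Set.univ.pi fun _ => Set.Ico (0:ℝ) h) \ {y : Fin d → ℝ | ‖y‖ ≤ s}) := by
  set B : Set (Fin d → ℝ) := Set.univ.pi fun i => Set.Ico (a i) (a i + h) with hB
  set B₀ : Set (Fin d → ℝ) := Set.univ.pi fun _ => Set.Ico (0:ℝ) h with hB₀
  set C : Set (Fin d → ℝ) := {x | ‖x - x₀‖ ≤ s} with hC
  set C₀ : Set (Fin d → ℝ) := {y | ‖y‖ ≤ s} with hC₀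
  have hCmeas : MeasurableSet C :=
    measurableSet_le ((continuous_id.sub continuous_const).norm.measurable) measurable_const
  have hC₀meas : MeasurableSet C₀ :=
    measurableSet_le continuous_norm.measurable measurable_const
  have volB : volume B = ENNReal.ofReal h ^ d := by
    rw [hB, volume_pi_pi]
    simp [Real.volume_Ico]
  have volB₀ : volume B₀ = ENNReal.ofReal h ^ d := by
    rw [hB₀, volume_pi_pi]
    simp [Real.volume_Ico]
  -- lower bound for volume (B ∩ C)
  have key1 : ENNReal.ofReal (min s h) ^ d ≤ volume (B ∩ C) := by
    have hsub : (Set.univ.pi fun i =>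
        Set.Ico (max (a i) (x₀ i - s)) (min (a i + h) (x₀ i + s))) ⊆ B ∩ C := by
      intro x hx
      constructor
      · intro i _
        have := hx i (Set.mem_univ i)
        exact ⟨le_trans (le_max_left _ _) this.1, lt_of_lt_of_le this.2 (min_le_left _ _)⟩
      · rw [hC, Set.mem_setOf_eq, pi_norm_le_iff_of_nonneg hs.le]
        intro i
        have := hx i (Set.mem_univ i)
        rw [Pi.sub_apply, Real.norm_eq_abs, abs_le]
        constructor
        · have := le_trans (le_max_right _ _) this.1; linarith
        · have := lt_of_lt_of_le this.2 (min_le_right _ _); linarith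
    refine le_trans ?_ (measure_mono hsub)
    rw [volume_pi_pi]
    simp only [Real.volume_Ico]
    have : ENNReal.ofReal (min s h) ^ d = ∏ _x : Fin d, ENNReal.ofReal (min s h) := by simp
    rw [this]
    refine Finset.prod_le_prod' fun i _ => ENNReal.ofReal_le_ofReal ?_
    exact aux_len (hax i) (hxa i) hs
  -- upper bound for volume (B₀ ∩ C₀)
  have key2 : volume (B₀ ∩ C₀) ≤ ENNReal.ofReal (min s h) ^ d := by
    have hsub : B₀ ∩ C₀ ⊆ Set.univ.pi fun _ : Fin d => Set.Icc (0:ℝ) (min s h) := by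
      rintro y ⟨hy1, hy2⟩ i _
      have h1 := hy1 i (Set.mem_univ i)
      have h2 : |y i| ≤ s := by
        have := norm_le_pi_norm y i
        rw [Real.norm_eq_abs] at this
        exact this.trans hy2
      exact ⟨h1.1, le_min ((le_abs_self _).trans h2) h1.2.le⟩
    refine le_trans (measure_mono hsub) ?_
    rw [volume_pi_pi]
    simp [Real.volume_Icc]
  have hBmeas : MeasurableSet B := MeasurableSet.univ_pi fun i => measurableSet_Ico
  have hB₀meas : MeasurableSet B₀ := MeasurableSet.univ_pi fun _ => measurableSet_Ico
  have hfin : volume (B ∩ C) ≠ ⊤ := by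
    refine ne_top_of_le_ne_top ?_ (measure_mono Set.inter_subset_left)
    rw [volB]; exact (ENNReal.pow_ne_top ENNReal.ofReal_ne_top)
  have hfin₀ : volume (B₀ ∩ C₀) ≠ ⊤ := by
    refine ne_top_of_le_ne_top ?_ (measure_mono Set.inter_subset_left)
    rw [volB₀]; exact (ENNReal.pow_ne_top ENNReal.ofReal_ne_top)
  have e1 : volume (B \ C) = volume B - volume (B ∩ C) := by
    rw [← Set.diff_self_inter]
    exact measure_diff Set.inter_subset_left (hBmeas.inter hCmeas).nullMeasurableSet hfin
  have e2 : volume (B₀ \ C₀) = volume B₀ - volume (B₀ ∩ C₀) := by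
    rw [← Set.diff_self_inter]
    exact measure_diff Set.inter_subset_left (hB₀meas.inter hC₀meas).nullMeasurableSet hfin₀
  rw [e1, e2, volB, volB₀]
  exact tsub_le_tsub le_rfl (key2.trans key1)

private theorem aux_main (d : ℕ) (f : (Fin d → ℝ) → ℝ) (x₀ a : Fin d → ℝ)
    (C₀ h₀ β : ℝ) (hC₀ : 0 < C₀) (hβ : 0 < β)
    (hf_int : ∫ x, f x = 1)
    (hmode : ∀ x, ‖x - x₀‖ ≤ h₀ → f x₀ - C₀ * ‖x - x₀‖ ^ β ≤ f x)
    (h : ℝ) (hh : 0 < h) (hhh₀ : h ≤ h₀)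
    (hax : ∀ i, a i ≤ x₀ i) (hxa : ∀ i, x₀ i < a i + h) :
    f x₀ * h ^ d
      - (C₀ * ∫ x : Fin d → ℝ in Set.univ.pi (fun _ => Set.Ico (0:ℝ) 1), ‖x‖ ^ β)
          * h ^ ((d : ℝ) + β)
      ≤ ∫ x in Set.univ.pi (fun i => Set.Ico (a i) (a i + h)), f x := by
  set B : Set (Fin d → ℝ) := Set.univ.pi fun i => Set.Ico (a i) (a i + h) with hB
  set B₀ : Set (Fin d → ℝ) := Set.univ.pi fun _ => Set.Ico (0:ℝ) h with hB₀
  set U : Set (Fin d → ℝ) := Set.univ.pi fun _ => Set.Ico (0:ℝ) 1 with hU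
  have hBmeas : MeasurableSet B := MeasurableSet.univ_pi fun i => measurableSet_Ico
  have hB₀meas : MeasurableSet B₀ := MeasurableSet.univ_pi fun _ => measurableSet_Ico
  have hUmeas : MeasurableSet U := MeasurableSet.univ_pi fun _ => measurableSet_Ico
  have volB : volume B = ENNReal.ofReal h ^ d := by
    rw [hB, volume_pi_pi]; simp [Real.volume_Ico]
  have volBlt : volume B < ⊤ := by
    rw [volB]; exact ENNReal.pow_lt_top ENNReal.ofReal_lt_top
  have volBreal : (volume B).toReal = h ^ d := by
    rw [volB, ENNReal.toReal_pow, ENNReal.toReal_ofReal hh.le]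
  have hg1cont : Continuous fun x : Fin d → ℝ => ‖x - x₀‖ ^ β :=
    ((continuous_id.sub continuous_const).norm).rpow_const fun x => Or.inr hβ.le
  have hg2cont : Continuous fun y : Fin d → ℝ => ‖y‖ ^ β :=
    continuous_norm.rpow_const fun x => Or.inr hβ.le
  have g1_nonneg : ∀ x : Fin d → ℝ, 0 ≤ ‖x - x₀‖ ^ β :=
    fun x => Real.rpow_nonneg (norm_nonneg _) _
  have g2_nonneg : ∀ y : Fin d → ℝ, 0 ≤ ‖y‖ ^ β :=
    fun y => Real.rpow_nonneg (norm_nonneg _) _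
  -- integrability
  have hInt1 : IntegrableOn (fun x => ‖x - x₀‖ ^ β) B volume := by
    have hK : IsCompact (Set.Icc a fun i => a i + h) := isCompact_Icc
    have := hg1cont.continuousOn.integrableOn_compact (μ := volume) hK
    refine this.mono_set ?_
    rw [← Set.pi_univ_Icc]
    exact Set.pi_mono fun i _ => Set.Ico_subset_Icc_self
  have hInt2 : IntegrableOn (fun y : Fin d → ℝ => ‖y‖ ^ β) B₀ volume := by
    have hK : IsCompact (Set.Icc (0 : Fin d → ℝ) fun _ => h) := isCompact_Icc
    have := hg2cont.continuousOn.integrableOn_compact (μ := volume) hK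
    refine this.mono_set ?_
    rw [← Set.pi_univ_Icc]
    exact Set.pi_mono fun i _ => Set.Ico_subset_Icc_self
  have hfInt : Integrable f := integrable_of_integral_eq_one hf_int
  have hconstInt : IntegrableOn (fun _ : Fin d → ℝ => f x₀) B volume :=
    integrableOn_const volBlt.ne
  -- step A
  have hBsub : ∀ x ∈ B, ‖x - x₀‖ ≤ h := by
    intro x hx
    rw [pi_norm_le_iff_of_nonneg hh.le]
    intro i
    have h1 := hx i (Set.mem_univ i)
    have h2 := hax i
    have h3 := hxa i
    rw [Pi.sub_apply, Real.norm_eq_abs, abs_le]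
    simp only [Set.mem_Ico] at h1
    constructor <;> linarith
  have stepA : ∫ x in B, (f x₀ - C₀ * ‖x - x₀‖ ^ β) ≤ ∫ x in B, f x :=
    setIntegral_mono_on (hconstInt.sub (hInt1.const_mul C₀)) hfInt.integrableOn hBmeas
      (fun x hx => hmode x ((hBsub x hx).trans hhh₀))
  have stepB : ∫ x in B, (f x₀ - C₀ * ‖x - x₀‖ ^ β)
      = f x₀ * h ^ d - C₀ * ∫ x in B, ‖x - x₀‖ ^ β := by
    rw [integral_sub hconstInt (hInt1.const_mul C₀), setIntegral_const, integral_const_mul,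
      smul_eq_mul, measureReal_def, volBreal]
    ring
  -- step C1 : layer cake comparison
  have c1 : ∫ x in B, ‖x - x₀‖ ^ β ≤ ∫ y in B₀, ‖y‖ ^ β := by
    rw [integral_eq_lintegral_of_nonneg_ae (Filter.Eventually.of_forall g1_nonneg)
        hg1cont.aestronglyMeasurable,
      integral_eq_lintegral_of_nonneg_ae (Filter.Eventually.of_forall g2_nonneg)
        hg2cont.aestronglyMeasurable]
    apply ENNReal.toReal_mono
    · exact hInt2.lintegral_lt_top.ne
    · rw [lintegral_eq_lintegral_meas_lt _ (Filter.Eventually.of_forall g1_nonneg)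
          hg1cont.measurable.aemeasurable,
        lintegral_eq_lintegral_meas_lt _ (Filter.Eventually.of_forall g2_nonneg)
          hg2cont.measurable.aemeasurable]
      refine lintegral_mono_ae ?_
      filter_upwards [self_mem_ae_restrict measurableSet_Ioi] with t ht
      have ht0 : (0:ℝ) < t := ht
      set s := t ^ (1/β) with hs
      have hs0 : 0 < s := Real.rpow_pos_of_pos ht0 _
      have m1 : MeasurableSet {x : Fin d → ℝ | t < ‖x - x₀‖ ^ β} :=
        measurableSet_lt measurable_const hg1cont.measurable
      have m2 : MeasurableSet {y : Fin d → ℝ | t < ‖y‖ ^ β} :=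
        measurableSet_lt measurable_const hg2cont.measurable
      rw [Measure.restrict_apply m1, Measure.restrict_apply m2]
      have hset1 : {x : Fin d → ℝ | t < ‖x - x₀‖ ^ β} ∩ B
          = B \ {x : Fin d → ℝ | ‖x - x₀‖ ≤ s} := by
        ext x
        simp only [Set.mem_inter_iff, Set.mem_diff, Set.mem_setOf_eq]
        rw [aux_lt_rpow_iff ht0 (norm_nonneg _) hβ, ← not_le (a := ‖x - x₀‖)]
        exact ⟨fun ⟨h1, h2⟩ => ⟨h2, h1⟩, fun ⟨h2, h1⟩ => ⟨h1, h2⟩⟩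
      have hset2 : {y : Fin d → ℝ | t < ‖y‖ ^ β} ∩ B₀
          = B₀ \ {y : Fin d → ℝ | ‖y‖ ≤ s} := by
        ext y
        simp only [Set.mem_inter_iff, Set.mem_diff, Set.mem_setOf_eq]
        rw [aux_lt_rpow_iff ht0 (norm_nonneg _) hβ, ← not_le (a := ‖y‖)]
        exact ⟨fun ⟨h1, h2⟩ => ⟨h2, h1⟩, fun ⟨h2, h1⟩ => ⟨h1, h2⟩⟩
      rw [hset1, hset2]
      exact aux_meas_tail_le d hh hs0 a x₀ hax hxa
  -- step C2 : scaling
  have scaling : ∫ y in B₀, ‖y‖ ^ β = h ^ ((d:ℝ) + β) * ∫ u in U, ‖u‖ ^ β := by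
    have hfinrank : Module.finrank ℝ (Fin d → ℝ) = d := by
      rw [Module.finrank_fintype_fun_eq_card, Fintype.card_fin]
    have hmem : ∀ u : Fin d → ℝ, h • u ∈ B₀ ↔ u ∈ U := by
      intro u
      simp only [hB₀, hU, Set.mem_pi, Set.mem_univ, forall_true_left, Set.mem_Ico,
        Pi.smul_apply, smul_eq_mul]
      constructor
      · intro H i
        obtain ⟨h1, h2⟩ := H i
        exact ⟨nonneg_of_mul_nonneg_right h1 hh, by nlinarith⟩
      · intro H i
        obtain ⟨h1, h2⟩ := H i
        exact ⟨mul_nonneg hh.le h1, by nlinarith⟩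
    have hindic : ∀ u : Fin d → ℝ,
        Set.indicator B₀ (fun y => ‖y‖ ^ β) (h • u)
          = Set.indicator U (fun u => h ^ β * ‖u‖ ^ β) u := by
      intro u
      by_cases hu : u ∈ U
      · rw [Set.indicator_of_mem hu, Set.indicator_of_mem ((hmem u).2 hu),
          norm_smul, Real.norm_eq_abs, abs_of_pos hh,
          Real.mul_rpow hh.le (norm_nonneg _)]
      · rw [Set.indicator_of_notMem hu,
          Set.indicator_of_notMem (fun hm => hu ((hmem u).1 hm))]
    have key := Measure.integral_comp_smul_of_nonneg volume
      (Set.indicator B₀ fun y : Fin d → ℝ => ‖y‖ ^ β) h (hR := hh.le)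
    rw [hfinrank] at key
    simp only [hindic] at key
    rw [integral_indicator hUmeas, integral_indicator hB₀meas, integral_const_mul,
      smul_eq_mul] at key
    have hd0 : (0:ℝ) < h ^ d := pow_pos hh d
    have : ∫ y in B₀, ‖y‖ ^ β = h ^ d * (h ^ β * ∫ u in U, ‖u‖ ^ β) := by
      rw [key]; field_simp
    rw [this, Real.rpow_add hh, Real.rpow_natCast]; ring
  -- assembly
  have hkey : C₀ * ∫ x in B, ‖x - x₀‖ ^ β
      ≤ (C₀ * ∫ u in U, ‖u‖ ^ β) * h ^ ((d:ℝ) + β) := by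
    have := mul_le_mul_of_nonneg_left (c1.trans scaling.le) hC₀.le
    nlinarith [this]
  rw [stepB] at stepA
  linarith

/-- If the density f satisfies f(x) ≥ f(x₀) - C₀‖x-x₀‖^β near the mode x₀, then for any bin
size 0 < h ≤ h₀, the probability mass of the bin [k₀h,(k₀+1)h) containing x₀
(with k₀ = ⌊x₀/h⌋ componentwise) is at least f(x₀)h^d - C₁h^{d+β},
where C₁ = C₀ ∫_{[0,1)^d} ‖x‖^β dx. -/
theorem mass_of_mode_bin_lower_bound (d : ℕ) (hd : 1 ≤ d)
    (f : (Fin d → ℝ) → ℝ) (x₀ : Fin d → ℝ)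
    (C₀ h₀ β : ℝ) (hC₀ : 0 < C₀) (hh₀ : 0 < h₀) (hβ : 0 < β)
    (hf_nonneg : ∀ x, 0 ≤ f x) (hf_int : ∫ x, f x = 1)
    (hmode : ∀ x, ‖x - x₀‖ ≤ h₀ → f x₀ - C₀ * ‖x - x₀‖ ^ β ≤ f x)
    (h : ℝ) (hh : 0 < h) (hhh₀ : h ≤ h₀) :
    f x₀ * h ^ d
      - (C₀ * ∫ x : Fin d → ℝ in Set.univ.pi (fun _ => Set.Ico (0:ℝ) 1), ‖x‖ ^ β)
          * h ^ ((d : ℝ) + β)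
      ≤ ∫ x : Fin d → ℝ in
          Set.univ.pi (fun i =>
            Set.Ico ((⌊x₀ i / h⌋ : ℝ) * h) (((⌊x₀ i / h⌋ : ℝ) + 1) * h)),
          f x := by
  have hax : ∀ i, (⌊x₀ i / h⌋ : ℝ) * h ≤ x₀ i := by
    intro i
    have h1 := Int.floor_le (x₀ i / h)
    have := mul_le_mul_of_nonneg_right h1 hh.le
    rwa [div_mul_cancel₀ _ hh.ne'] at this
  have hxa : ∀ i, x₀ i < (⌊x₀ i / h⌋ : ℝ) * h + h := by
    intro i
    have h1 := Int.lt_floor_add_one (x₀ i / h)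
    have := (div_lt_iff₀ hh).1 h1
    nlinarith
  have key := aux_main d f x₀ (fun i => (⌊x₀ i / h⌋ : ℝ) * h) C₀ h₀ β hC₀ hβ hf_int hmode
    h hh hhh₀ hax hxa
  have hset : ∀ i : Fin d, Set.Ico ((⌊x₀ i / h⌋ : ℝ) * h) (((⌊x₀ i / h⌋ : ℝ) + 1) * h)
      = Set.Ico ((⌊x₀ i / h⌋ : ℝ) * h) ((⌊x₀ i / h⌋ : ℝ) * h + h) := by
    intro i; rw [add_one_mul]
  simp only [hset]
  exact key
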